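/- For every 1 ≤ m ≤ l there exists a real symmetric positive semidefinite l×l matrix A of rank exactly m such that all p×p principal minors of A are strictly positive for 1 ≤ p ≤ m. -/

import Mathlib

open Matrix

/-- Rows of a rectangular Vandermonde matrix with distinct nodes are independent. -/
lemma aux_vand_vecMul {n m : ℕ} (h : n ≤ m) (w : Fin n → ℝ) (hw : Function.Injective w)
    (x : Fin n → ℝ) (hx : x ᵥ* (Matrix.of fun i (j : Fin m) => w i ^ (j : ℕ)) = 0) :
    x = 0 := by
  have hv : x ᵥ* Matrix.vandermonde w = 0 := by
    funext j
    have := congrFun hx (Fin.castLE h j)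
    simpa [Matrix.vecMul, dotProduct, Matrix.vandermonde] using this
  exact Matrix.eq_zero_of_vecMul_eq_zero (Matrix.det_vandermonde_ne_zero_iff.mpr hw) hv

/-- A Gram matrix `W * Wᵀ` with independent rows of `W` has positive determinant. -/
lemma aux_gram_det_pos {k : Type*} [Fintype k] [DecidableEq k] {m : ℕ}
    (W : Matrix k (Fin m) ℝ) (hW : ∀ x : k → ℝ, x ᵥ* W = 0 → x = 0) :
    0 < (W * Wᵀ).det := by
  have hps : (W * Wᵀ).PosSemidef := by
    simpa using Matrix.posSemidef_self_mul_conjTranspose W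
  have hker : ∀ x : k → ℝ, (W * Wᵀ) *ᵥ x = 0 → x = 0 := by
    intro x hx
    have h1 : x ⬝ᵥ ((W * Wᵀ) *ᵥ x) = 0 := by rw [hx, dotProduct_zero]
    rw [← Matrix.mulVec_mulVec, Matrix.dotProduct_mulVec, Matrix.mulVec_transpose] at h1
    exact hW x (dotProduct_self_eq_zero.mp h1)
  have hpd : (W * Wᵀ).PosDef := by
    refine Matrix.posDef_iff_dotProduct_mulVec.mpr ⟨hps.1, fun x hx => ?_⟩
    have hst : star x = x := rfl
    rw [hst, ← Matrix.mulVec_mulVec, Matrix.dotProduct_mulVec, Matrix.mulVec_transpose]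
    have hne : x ᵥ* W ≠ 0 := fun h0 => hx (hW x h0)
    have : (x ᵥ* W) ⬝ᵥ star (x ᵥ* W) = (x ᵥ* W) ⬝ᵥ (x ᵥ* W) := rfl
    rw [← this]
    exact Matrix.dotProduct_self_star_pos_iff.mpr hne
  exact hpd.det_pos

theorem stmt8 (l m : ℕ) (hm : 1 ≤ m) (hml : m ≤ l) :
    ∃ A : Matrix (Fin l) (Fin l) ℝ, A.IsSymm ∧ A.PosSemidef ∧ A.rank = m ∧
      ∀ S : Finset (Fin l), S.Nonempty → S.card ≤ m →
        0 < (A.submatrix (fun i : S => (i : Fin l)) (fun i : S => (i : Fin l))).det := by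
  set u : Fin l → ℝ := fun i => (i : ℕ) + 1 with hu
  have huinj : Function.Injective u := by
    intro i j hij
    simp only [hu] at hij
    have : ((i : ℕ) : ℝ) = ((j : ℕ) : ℝ) := by linarith
    exact Fin.ext (by exact_mod_cast this)
  set V : Matrix (Fin l) (Fin m) ℝ := Matrix.of fun i j => u i ^ (j : ℕ) with hV
  refine ⟨V * Vᵀ, ?_, ?_, ?_, ?_⟩
  · simp [Matrix.IsSymm, Matrix.transpose_mul]
  · simpa using Matrix.posSemidef_self_mul_conjTranspose V
  · have h1 : (V * Vᵀ).rank = V.rank := Matrix.rank_self_mul_transpose V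
    have h2 : V.rank ≤ m := by simpa using V.rank_le_card_width
    have hvand : V.submatrix (Fin.castLE hml) id =
        Matrix.vandermonde (fun i : Fin m => u (Fin.castLE hml i)) := by
      ext i j; rfl
    have hunit : IsUnit (V.submatrix (Fin.castLE hml) id) := by
      rw [Matrix.isUnit_iff_isUnit_det, hvand]
      exact (Matrix.det_vandermonde_ne_zero_iff.mpr
        (huinj.comp (Fin.castLE_injective hml))).isUnit
    have h3 : m ≤ V.rank := by
      have hsub : V.submatrix (Fin.castLE hml) id =
          ((1 : Matrix (Fin l) (Fin l) ℝ).submatrix (Fin.castLE hml) (Equiv.refl _)) * V := by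
        rw [Matrix.one_submatrix_mul]
        rfl
      have hr : (V.submatrix (Fin.castLE hml) id).rank = m := by
        rw [Matrix.rank_of_isUnit _ hunit]
        simp
      calc m = (V.submatrix (Fin.castLE hml) id).rank := hr.symm
        _ ≤ V.rank := by
            rw [hsub]; exact Matrix.rank_mul_le_right _ _
    rw [h1]; exact le_antisymm h2 h3
  · intro S hS hcard
    set W : Matrix S (Fin m) ℝ := V.submatrix (fun i : S => (i : Fin l)) id with hW
    have hsub : (V * Vᵀ).submatrix (fun i : S => (i : Fin l)) (fun i : S => (i : Fin l))
        = W * Wᵀ := by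
      ext i j
      simp [hW, Matrix.mul_apply]
    rw [hsub]
    apply aux_gram_det_pos
    intro x hx
    set e : S ≃ Fin S.card := S.equivFin with he
    have hn : S.card ≤ m := hcard
    have hwinj : Function.Injective (fun i : Fin S.card => u ((e.symm i : Fin l))) := by
      intro a b hab
      exact e.symm.injective (Subtype.ext (huinj hab))
    have hx' : (fun i : Fin S.card => x (e.symm i)) ᵥ*
        (Matrix.of fun i (j : Fin m) => u ((e.symm i : Fin l)) ^ (j : ℕ)) = 0 := by
      funext j
      have hj := congrFun hx j
      simp only [Matrix.vecMul, dotProduct, Matrix.of_apply, Pi.zero_apply] at hj ⊢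
      rw [← hj]
      exact Fintype.sum_equiv e.symm _ _ (fun i => rfl)
    have h0 := aux_vand_vecMul hn _ hwinj _ hx'
    funext s
    have := congrFun h0 (e s)
    simpa using this
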